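/- arXiv:2311.12370 — 2 statements merged into one kernel-verified Lean document; each statement's English description precedes it below -/
import Mathlib

section
/- For a positive integer m, define λ_m = (2π)^{-m/2} · m^{m/2} · e^{-m/2} · σ_m, where σ_m = 2π^{(m+1)/2}/Γ((m+1)/2) is the m-dimensional Hausdorff measure of the unit sphere S^m ⊂ ℝ^{m+1}. Then the sequence (λ_m)_{m ≥ 1} is strictly decreasing: λ_{m+1} < λ_m for every m ≥ 1. In particular the entropies of the self-shrinking cylinders S^m(√m) × ℝ^{n-m} are all distinct and strictly decreasing in m. -/
open Real Filter

/-- The entropy `λ_m = (2π)^{-m/2} m^{m/2} e^{-m/2} σ_m` of the round sphere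
`S^m(√m)` (with `σ_m = 2π^{(m+1)/2}/Γ((m+1)/2)` the area of the unit `m`-sphere). -/
noncomputable def sphereEntropy (m : ℕ) : ℝ :=
  (2 * Real.pi) ^ (-(m : ℝ) / 2) * (m : ℝ) ^ ((m : ℝ) / 2) * Real.exp (-(m : ℝ) / 2) *
    (2 * Real.pi ^ (((m : ℝ) + 1) / 2) / Real.Gamma (((m : ℝ) + 1) / 2))


lemma log_ratio_ub {t : ℝ} (h0 : 0 < t) (h1 : t < 1) :
    log (1 + t) - log (1 - t) ≤ 2*t + 2*t^3/3 + 2*t^5/(1-t) := by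
  have ht : |t| < 1 := by rw [abs_of_pos h0]; exact h1
  have ht' : |(-t)| < 1 := by rwa [abs_neg]
  have h₁ := Real.abs_log_sub_add_sum_range_le ht 4
  have h₂ := Real.abs_log_sub_add_sum_range_le ht' 4
  rw [abs_of_pos h0] at h₁
  rw [abs_neg, abs_of_pos h0] at h₂
  simp [Finset.sum_range_succ] at h₁ h₂
  rw [abs_le] at h₁ h₂
  obtain ⟨h₁a, h₁b⟩ := h₁; obtain ⟨h₂a, h₂b⟩ := h₂
  ring_nf at h₁a h₁b h₂a h₂b ⊢
  linarith

lemma log_ratio_lb {t : ℝ} (h0 : 0 < t) (h1 : t < 1) :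
    2*t + 2*t^3/3 - 2*t^5/(1-t) ≤ log (1 + t) - log (1 - t) := by
  have ht : |t| < 1 := by rw [abs_of_pos h0]; exact h1
  have ht' : |(-t)| < 1 := by rwa [abs_neg]
  have h₁ := Real.abs_log_sub_add_sum_range_le ht 4
  have h₂ := Real.abs_log_sub_add_sum_range_le ht' 4
  rw [abs_of_pos h0] at h₁
  rw [abs_neg, abs_of_pos h0] at h₂
  simp [Finset.sum_range_succ] at h₁ h₂
  rw [abs_le] at h₁ h₂
  obtain ⟨h₁a, h₁b⟩ := h₁; obtain ⟨h₂a, h₂b⟩ := h₂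
  ring_nf at h₁a h₁b h₂a h₂b ⊢
  linarith

lemma logd_ub {n : ℝ} (hn : 0 < n) :
    log (n+1) - log n ≤ 2/(2*n+1) + 2/(3*(2*n+1)^3) + 1/((2*n+1)^4*n) := by
  have hd : (0:ℝ) < 2*n+1 := by linarith
  have h0 : 0 < 1/(2*n+1) := by positivity
  have h1 : 1/(2*n+1) < 1 := by rw [div_lt_one hd]; linarith
  have h := log_ratio_ub h0 h1
  have e1 : 1 + 1/(2*n+1) = (2*(n+1))/(2*n+1) := by field_simp; ring
  have e2 : 1 - 1/(2*n+1) = (2*n)/(2*n+1) := by field_simp; ring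
  have e3 : log (1+1/(2*n+1)) - log (1-1/(2*n+1)) = log (n+1) - log n := by
    rw [e1, e2, log_div (by positivity) hd.ne', log_div (by positivity) hd.ne',
        log_mul two_ne_zero (by positivity), log_mul two_ne_zero hn.ne']
    ring
  have e4 : 2*(1/(2*n+1)) + 2*(1/(2*n+1))^3/3 + 2*(1/(2*n+1))^5/(1-1/(2*n+1))
      = 2/(2*n+1) + 2/(3*(2*n+1)^3) + 1/((2*n+1)^4*n) := by
    rw [e2]; field_simp
  rw [e3, e4] at h
  exact h

lemma logd_lb {n : ℝ} (hn : 0 < n) :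
    2/(2*n+1) + 2/(3*(2*n+1)^3) - 1/((2*n+1)^4*n) ≤ log (n+1) - log n := by
  have hd : (0:ℝ) < 2*n+1 := by linarith
  have h0 : 0 < 1/(2*n+1) := by positivity
  have h1 : 1/(2*n+1) < 1 := by rw [div_lt_one hd]; linarith
  have h := log_ratio_lb h0 h1
  have e1 : 1 + 1/(2*n+1) = (2*(n+1))/(2*n+1) := by field_simp; ring
  have e2 : 1 - 1/(2*n+1) = (2*n)/(2*n+1) := by field_simp; ring
  have e3 : log (1+1/(2*n+1)) - log (1-1/(2*n+1)) = log (n+1) - log n := by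
    rw [e1, e2, log_div (by positivity) hd.ne', log_div (by positivity) hd.ne',
        log_mul two_ne_zero (by positivity), log_mul two_ne_zero hn.ne']
    ring
  have e4 : 2*(1/(2*n+1)) + 2*(1/(2*n+1))^3/3 - 2*(1/(2*n+1))^5/(1-1/(2*n+1))
      = 2/(2*n+1) + 2/(3*(2*n+1)^3) - 1/((2*n+1)^4*n) := by
    rw [e2]; field_simp
  rw [e3, e4] at h
  exact h

lemma polyineq {x : ℝ} (hx : 1 ≤ x) :
    0 < (x+3)*(2/(2*x+5) + 2/(3*(2*x+5)^3) - 1/((2*x+5)^4*(x+2)))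
      - (2/(2*x+3) + 2/(3*(2*x+3)^3) + 1/((2*x+3)^4*(x+1)))
      - x*(2/(2*x+1) + 2/(3*(2*x+1)^3) + 1/((2*x+1)^4*x)) := by
  have h0 : (0:ℝ) < x := by linarith
  have h1 : (0:ℝ) < x+1 := by linarith
  have h2 : (0:ℝ) < x+2 := by linarith
  have h5 : (0:ℝ) < 2*x+5 := by linarith
  have h3 : (0:ℝ) < 2*x+3 := by linarith
  have hd : (0:ℝ) < 2*x+1 := by linarith
  have key : (x+3)*(2/(2*x+5) + 2/(3*(2*x+5)^3) - 1/((2*x+5)^4*(x+2)))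
      - (2/(2*x+3) + 2/(3*(2*x+3)^3) + 1/((2*x+3)^4*(x+1)))
      - x*(2/(2*x+1) + 2/(3*(2*x+1)^3) + 1/((2*x+1)^4*x))
      = (8192*x^11 + 133632*x^10 + 964608*x^9 + 4048128*x^8 + 10905600*x^7
          + 19623360*x^6 + 23707904*x^5 + 18674496*x^4 + 8726752*x^3 + 1689162*x^2
          - 292904*x - 148869)
        / (3*(2*x+5)^4*(2*x+3)^4*(2*x+1)^4*(x+1)*(x+2)) := by
    field_simp
    ring
  rw [key]
  apply div_pos ?_ (by positivity)
  have hs : (0:ℝ) ≤ x - 1 := by linarith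
  nlinarith [pow_nonneg hs 11, pow_nonneg hs 10, pow_nonneg hs 9, pow_nonneg hs 8,
    pow_nonneg hs 7, pow_nonneg hs 6, pow_nonneg hs 5, pow_nonneg hs 4,
    pow_nonneg hs 3, pow_nonneg hs 2]

/-- Key combinatorial step: `(m+2)^(m+4) (m+1)^m < (m+3)^(m+3) m^m (m+1)`. -/
lemma step_ineq (m : ℕ) (hm : 1 ≤ m) :
    ((m:ℝ)+2)^(m+4) * ((m:ℝ)+1)^m < ((m:ℝ)+3)^(m+3) * (m:ℝ)^m * ((m:ℝ)+1) := by
  have hx : (1:ℝ) ≤ (m:ℝ) := Nat.one_le_cast.mpr hm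
  set x : ℝ := (m:ℝ) with hxdef
  have h0 : (0:ℝ) < x := by linarith
  have h1 : (0:ℝ) < x+1 := by linarith
  have h2 : (0:ℝ) < x+2 := by linarith
  have h3 : (0:ℝ) < x+3 := by linarith
  -- log comparison
  have hlog : (x+4)*log (x+2) + x*log (x+1) < (x+3)*log (x+3) + x*log x + log (x+1) := by
    have b1 := logd_lb h2  -- bound for log(x+3) - log(x+2)
    have b2 := logd_ub h1  -- log(x+2) - log(x+1)
    have b3 := logd_ub h0  -- log(x+1) - log x
    have e1 : x + 2 + 1 = x + 3 := by ring
    have e2 : x + 1 + 1 = x + 2 := by ring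
    rw [e1] at b1; rw [e2] at b2
    have hb1 : (x+3) * (2/(2*(x+2)+1) + 2/(3*(2*(x+2)+1)^3) - 1/((2*(x+2)+1)^4*(x+2)))
        ≤ (x+3) * (log (x+3) - log (x+2)) := by
      apply mul_le_mul_of_nonneg_left b1 h3.le
    have hb3 : x * (log (x+1) - log x)
        ≤ x * (2/(2*x+1) + 2/(3*(2*x+1)^3) + 1/((2*x+1)^4*x)) := by
      apply mul_le_mul_of_nonneg_left b3 h0.le
    have hp := polyineq hx
    have e5 : 2*(x+2)+1 = 2*x+5 := by ring
    have e6 : 2*(x+1)+1 = 2*x+3 := by ring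
    rw [e5] at hb1; rw [e6] at b2
    nlinarith [hb1, b2, hb3, hp]
  -- exponentiate
  have lhs_pos : (0:ℝ) < (x+2)^(m+4) * (x+1)^m := by positivity
  have rhs_pos : (0:ℝ) < (x+3)^(m+3) * x^m * (x+1) := by positivity
  rw [← Real.log_lt_log_iff lhs_pos rhs_pos]
  rw [Real.log_mul (by positivity) (by positivity), Real.log_mul (by positivity) (by positivity),
      Real.log_mul (by positivity) (by positivity),
      Real.log_pow, Real.log_pow, Real.log_pow, Real.log_pow]
  push_cast
  rw [← hxdef]
  linarith [hlog]

noncomputable def Gm (m : ℕ) : ℝ := Real.Gamma (((m:ℝ)+1)/2)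

lemma Gm_pos (m : ℕ) : 0 < Gm m := Real.Gamma_pos_of_pos (by positivity)

lemma Gm_rec (m : ℕ) : Gm (m+2) = (((m:ℝ)+1)/2) * Gm m := by
  unfold Gm
  have : (((m:ℕ)+2:ℕ):ℝ) = (m:ℝ)+2 := by push_cast; ring
  rw [this]
  have e : ((m:ℝ)+2+1)/2 = ((m:ℝ)+1)/2 + 1 := by ring
  rw [e, Real.Gamma_add_one (by positivity)]

lemma gamma_midpoint_sq_le {a b : ℝ} (ha : 0 < a) (hb : 0 < b) :
    Real.Gamma ((a+b)/2) ^ 2 ≤ Real.Gamma a * Real.Gamma b := by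
  have h := Real.convexOn_log_Gamma.2 (Set.mem_Ioi.2 ha) (Set.mem_Ioi.2 hb)
    (by norm_num : (0:ℝ) ≤ 1/2) (by norm_num : (0:ℝ) ≤ 1/2) (by norm_num)
  simp only [Function.comp_apply, smul_eq_mul] at h
  have e : (1/2 : ℝ) * a + (1/2 : ℝ) * b = (a+b)/2 := by ring
  rw [e] at h
  have hga := Real.Gamma_pos_of_pos ha
  have hgb := Real.Gamma_pos_of_pos hb
  have hgm := Real.Gamma_pos_of_pos (show 0 < (a+b)/2 by linarith)
  calc Real.Gamma ((a+b)/2) ^ 2 = exp (2 * log (Real.Gamma ((a+b)/2))) := by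
        rw [show (2:ℝ) * log (Real.Gamma ((a+b)/2)) = log (Real.Gamma ((a+b)/2)) + log (Real.Gamma ((a+b)/2)) by ring,
          exp_add, exp_log hgm]
        ring
    _ ≤ exp (log (Real.Gamma a) + log (Real.Gamma b)) := by
        apply exp_le_exp.mpr; linarith
    _ = Real.Gamma a * Real.Gamma b := by
        rw [exp_add, exp_log hga, exp_log hgb]

lemma W_ub (m : ℕ) : Gm (m+1)^2 ≤ (((m:ℝ)+1)/2) * Gm m^2 := by
  have h := gamma_midpoint_sq_le (a := ((m:ℝ)+1)/2) (b := ((m:ℝ)+3)/2)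
    (by positivity) (by positivity)
  have e1 : ((((m:ℝ)+1)/2) + (((m:ℝ)+3)/2))/2 = (((m+1:ℕ):ℝ)+1)/2 := by push_cast; ring
  have e2 : ((m:ℝ)+3)/2 = (((m+2:ℕ):ℝ)+1)/2 := by push_cast; ring
  rw [e1, e2] at h
  have h2 : Real.Gamma ((((m+2:ℕ):ℝ)+1)/2) = (((m:ℝ)+1)/2) * Gm m := Gm_rec m
  rw [h2] at h
  unfold Gm at h ⊢
  nlinarith [h]

lemma W_lb (m : ℕ) (hm : 1 ≤ m) : ((m:ℝ)/2) * Gm m^2 ≤ Gm (m+1)^2 := by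
  have hm' : (1:ℝ) ≤ (m:ℝ) := Nat.one_le_cast.mpr hm
  have h := gamma_midpoint_sq_le (a := (m:ℝ)/2) (b := ((m:ℝ)+2)/2)
    (by positivity) (by positivity)
  have e1 : (((m:ℝ)/2) + (((m:ℝ)+2)/2))/2 = ((m:ℝ)+1)/2 := by ring
  rw [e1] at h
  -- Γ(m/2)·(m/2) = Γ(m/2+1) = Γ((m+2)/2) = Gm (m+1)
  have h2 : Real.Gamma ((m:ℝ)/2 + 1) = ((m:ℝ)/2) * Real.Gamma ((m:ℝ)/2) :=
    Real.Gamma_add_one (by positivity)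
  have e3 : (m:ℝ)/2 + 1 = ((m:ℝ)+2)/2 := by ring
  rw [e3] at h2
  have e4 : ((m:ℝ)+2)/2 = (((m+1:ℕ):ℝ)+1)/2 := by push_cast; ring
  rw [e4] at h h2
  have hGhalf := Real.Gamma_pos_of_pos (show (0:ℝ) < (m:ℝ)/2 by positivity)
  have hG1 := Gm_pos (m+1)
  have hG0 := Gm_pos m
  unfold Gm at *
  -- h : Γ((m+1)/2)^2 ≤ Γ(m/2) * Γ((m+2)/2), h2 : Γ((m+2)/2) = (m/2)Γ(m/2)
  nlinarith [h, h2, hGhalf, hG1, hG0, sq_nonneg (Real.Gamma ((((m+1:ℕ):ℝ)+1)/2))]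

noncomputable def gseq (m : ℕ) : ℝ :=
  2 * exp 1 * (m:ℝ)^m * Gm (m+1)^2 / (((m:ℝ)+1)^(m+1) * Gm m^2)

lemma g_step (m : ℕ) (hm : 1 ≤ m) : gseq (m+2) < gseq m := by
  have hm' : (1:ℝ) ≤ (m:ℝ) := Nat.one_le_cast.mpr hm
  have hstep := step_ineq m hm
  have hu := Gm_pos m
  have hv := Gm_pos (m+1)
  have hu2 := pow_pos hu 2
  have hv2 := pow_pos hv 2
  have hd1 : (0:ℝ) < (((m+2:ℕ):ℝ)+1)^(m+2+1) * Gm (m+2)^2 :=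
    mul_pos (pow_pos (by positivity) _) (pow_pos (Gm_pos _) 2)
  have hd2 : (0:ℝ) < (((m:ℕ):ℝ)+1)^(m+1) * Gm m^2 :=
    mul_pos (pow_pos (by positivity) _) hu2
  unfold gseq
  rw [div_lt_div_iff₀ hd1 hd2]
  have r1 : Gm (m+2+1) = (((m:ℝ)+2)/2) * Gm (m+1) := by
    have h' := Gm_rec (m+1)
    rw [show m+1+2 = m+2+1 from rfl] at h'
    rw [h']; push_cast; ring
  have r2 : Gm (m+2) = (((m:ℝ)+1)/2) * Gm m := Gm_rec m
  rw [r1, r2]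
  have c1 : ((m+2:ℕ):ℝ) = (m:ℝ)+2 := by push_cast; ring
  rw [c1]
  have Cpos : (0:ℝ) < exp 1 * Gm (m+1)^2 * Gm m^2 * ((m:ℝ)+1) / 2 := by
    apply div_pos ?_ two_pos
    exact mul_pos (mul_pos (mul_pos (exp_pos 1) hv2) hu2) (by positivity)
  have key := mul_lt_mul_of_pos_left hstep Cpos
  calc 2 * exp 1 * ((m:ℝ) + 2) ^ (m + 2) * (((m:ℝ) + 2) / 2 * Gm (m + 1)) ^ 2 *
        (((m:ℝ) + 1) ^ (m + 1) * Gm m ^ 2)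
      = exp 1 * Gm (m+1)^2 * Gm m^2 * ((m:ℝ)+1)/2 * (((m:ℝ)+2)^(m+4) * ((m:ℝ)+1)^m) := by
        ring
    _ < exp 1 * Gm (m+1)^2 * Gm m^2 * ((m:ℝ)+1)/2 *
          (((m:ℝ)+3)^(m+3) * (m:ℝ)^m * ((m:ℝ)+1)) := key
    _ = 2 * exp 1 * (m:ℝ) ^ m * Gm (m + 1) ^ 2 *
          (((m:ℝ) + 2 + 1) ^ (m + 2 + 1) * (((m:ℝ) + 1) / 2 * Gm m) ^ 2) := by
        ring

lemma g_tendsto : Tendsto gseq atTop (nhds 1) := by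
  have heq : ∀ m : ℕ, gseq m =
      (Gm (m+1)^2 / ((((m:ℝ)+1)/2) * Gm m^2)) * (exp 1 * (m:ℝ)^m / ((m:ℝ)+1)^m) := by
    intro m
    have hu := (Gm_pos m).ne'
    have h1 : ((m:ℝ)+1) ≠ 0 := by positivity
    unfold gseq
    field_simp
    ring
  have limA : Tendsto (fun m : ℕ => Gm (m+1)^2 / ((((m:ℝ)+1)/2) * Gm m^2)) atTop (nhds 1) := by
    apply tendsto_of_tendsto_of_tendsto_of_le_of_le' (tendsto_natCast_div_add_atTop (1:ℝ))
      tendsto_const_nhds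
    · filter_upwards [eventually_ge_atTop 1] with m hm
      have hD : (0:ℝ) < (((m:ℝ)+1)/2) * Gm m^2 :=
        mul_pos (by positivity) (pow_pos (Gm_pos m) 2)
      rw [le_div_iff₀ hD]
      have h1 : ((m:ℝ)+1) ≠ 0 := by positivity
      have e : (m:ℝ)/((m:ℝ)+1) * ((((m:ℝ)+1)/2) * Gm m^2) = ((m:ℝ)/2) * Gm m^2 := by
        field_simp
      rw [e]
      exact W_lb m hm
    · filter_upwards with m
      have hD : (0:ℝ) < (((m:ℝ)+1)/2) * Gm m^2 :=
        mul_pos (by positivity) (pow_pos (Gm_pos m) 2)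
      rw [div_le_one hD]
      exact W_ub m
  have limB : Tendsto (fun m : ℕ => exp 1 * (m:ℝ)^m / ((m:ℝ)+1)^m) atTop (nhds 1) := by
    have h := Real.tendsto_one_add_div_pow_exp 1
    have h2 : Tendsto (fun n : ℕ => exp 1 / (1 + 1/(n:ℝ))^n) atTop (nhds 1) := by
      have := (tendsto_const_nhds :
        Tendsto (fun _ : ℕ => exp 1) atTop (nhds (exp 1))).div h (exp_ne_zero 1)
      simpa [Pi.div_def] using this
    apply h2.congr'
    filter_upwards [eventually_ge_atTop 1] with m hm
    have hm0 : (0:ℝ) < (m:ℝ) := by exact_mod_cast hm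
    have e : (1 + 1/(m:ℝ))^m = ((m:ℝ)+1)^m / (m:ℝ)^m := by
      rw [← div_pow]
      congr 1
      field_simp
    rw [e, div_div_eq_mul_div]
  have := limA.mul limB
  rw [one_mul] at this
  exact this.congr (fun m => (heq m).symm)

lemma one_lt_gseq (m : ℕ) (hm : 1 ≤ m) : 1 < gseq m := by
  have h2 : ∀ k : ℕ, gseq (m+2+2*k) ≤ gseq (m+2) := by
    intro k
    induction k with
    | zero => simp
    | succ n ih =>
      have hstep := g_step (m+2+2*n) (by omega)
      have e : m+2+2*(n+1) = (m+2+2*n)+2 := by omega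
      rw [e]
      exact le_trans hstep.le ih
  have hsub : Tendsto (fun k : ℕ => gseq (m+2+2*k)) atTop (nhds 1) := by
    apply g_tendsto.comp
    apply StrictMono.tendsto_atTop
    intro a b hab
    simp only []
    omega
  have h1 : (1:ℝ) ≤ gseq (m+2) := le_of_tendsto' hsub h2
  linarith [g_step m hm]



lemma lam_pos (m : ℕ) (hm : 1 ≤ m) : 0 < sphereEntropy m := by
  have hm0 : (0:ℝ) < m := by exact_mod_cast hm
  have hπ := pi_pos
  unfold sphereEntropy
  apply mul_pos (mul_pos (mul_pos ?_ ?_) ?_) ?_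
  · exact rpow_pos_of_pos (by positivity) _
  · exact rpow_pos_of_pos hm0 _
  · exact exp_pos _
  · exact div_pos (mul_pos two_pos (rpow_pos_of_pos hπ _))
      (Real.Gamma_pos_of_pos (by positivity))

lemma lam_sq (m : ℕ) (hm : 1 ≤ m) :
    (sphereEntropy m)^2 = 4 * π * (m:ℝ)^(m:ℕ) / ((2:ℝ)^m * (exp 1)^m * Gm m^2) := by
  have hm0 : (0:ℝ) < m := by exact_mod_cast hm
  have hπ := pi_pos
  have f1 : ((2*π) ^ (-(m:ℝ)/2)) * ((2*π) ^ (-(m:ℝ)/2)) = ((2:ℝ)^m * π^m)⁻¹ := by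
    rw [← Real.rpow_add (by positivity), show -(m:ℝ)/2 + -(m:ℝ)/2 = -(m:ℝ) by ring,
      Real.rpow_neg (by positivity), Real.rpow_natCast, mul_pow]
  have f2 : (m:ℝ)^((m:ℝ)/2) * (m:ℝ)^((m:ℝ)/2) = (m:ℝ)^(m:ℕ) := by
    rw [← Real.rpow_add hm0, show (m:ℝ)/2 + (m:ℝ)/2 = (m:ℝ) by ring, Real.rpow_natCast]
  have f3 : exp (-(m:ℝ)/2) * exp (-(m:ℝ)/2) = ((exp 1)^m)⁻¹ := by
    rw [← Real.exp_add, show -(m:ℝ)/2 + -(m:ℝ)/2 = -(m:ℝ) by ring, Real.exp_neg,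
      show ((m:ℝ)) = (m:ℕ)*(1:ℝ) by push_cast; ring, Real.exp_nat_mul]
  have f4 : (π ^ (((m:ℝ)+1)/2)) * (π ^ (((m:ℝ)+1)/2)) = π^(m:ℕ) * π := by
    rw [← Real.rpow_add hπ, show ((m:ℝ)+1)/2 + ((m:ℝ)+1)/2 = ((m+1:ℕ):ℝ) by push_cast; ring,
      Real.rpow_natCast, pow_succ]
  have hG : Gm m ≠ 0 := (Gm_pos m).ne'
  have hπm : (π:ℝ)^(m:ℕ) ≠ 0 := by positivity
  unfold sphereEntropy
  rw [show Real.Gamma (((m:ℝ)+1)/2) = Gm m from rfl]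
  rw [sq]
  calc (2*π) ^ (-(m:ℝ)/2) * (m:ℝ)^((m:ℝ)/2) * exp (-(m:ℝ)/2) * (2 * π ^ (((m:ℝ)+1)/2) / Gm m) *
        ((2*π) ^ (-(m:ℝ)/2) * (m:ℝ)^((m:ℝ)/2) * exp (-(m:ℝ)/2) * (2 * π ^ (((m:ℝ)+1)/2) / Gm m))
      = (((2*π) ^ (-(m:ℝ)/2)) * ((2*π) ^ (-(m:ℝ)/2))) * ((m:ℝ)^((m:ℝ)/2) * (m:ℝ)^((m:ℝ)/2)) *
        (exp (-(m:ℝ)/2) * exp (-(m:ℝ)/2)) * ((π ^ (((m:ℝ)+1)/2)) * (π ^ (((m:ℝ)+1)/2))) *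
        4 / Gm m^2 := by ring
    _ = ((2:ℝ)^m * π^m)⁻¹ * (m:ℝ)^(m:ℕ) * ((exp 1)^m)⁻¹ * (π^(m:ℕ) * π) * 4 / Gm m^2 := by
        rw [f1, f2, f3, f4]
    _ = 4 * π * (m:ℝ)^(m:ℕ) / ((2:ℝ)^m * (exp 1)^m * Gm m^2) := by
        field_simp

theorem main1 (m : ℕ) (hm : 1 ≤ m) : sphereEntropy (m + 1) < sphereEntropy m := by
  have key := one_lt_gseq m hm
  unfold gseq at key
  have hu2 := pow_pos (Gm_pos m) 2
  have hv2 := pow_pos (Gm_pos (m+1)) 2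
  have hD : (0:ℝ) < ((m:ℝ)+1)^(m+1) * Gm m^2 := mul_pos (by positivity) hu2
  rw [lt_div_iff₀ hD, one_mul] at key
  have hsq : (sphereEntropy (m+1))^2 < (sphereEntropy m)^2 := by
    rw [lam_sq m hm, lam_sq (m+1) (by omega)]
    have hd1 : (0:ℝ) < (2:ℝ)^(m+1) * (exp 1)^(m+1) * Gm (m+1)^2 := by
      apply mul_pos (by positivity) hv2
    have hd2 : (0:ℝ) < (2:ℝ)^m * (exp 1)^m * Gm m^2 := by
      apply mul_pos (by positivity) hu2
    rw [div_lt_div_iff₀ hd1 hd2]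
    have c1 : ((m+1:ℕ):ℝ) = (m:ℝ)+1 := by push_cast; ring
    rw [c1]
    have Cpos : (0:ℝ) < 4*π*(2:ℝ)^m*(exp 1)^m := by positivity
    have key2 := mul_lt_mul_of_pos_left key Cpos
    calc 4*π*((m:ℝ)+1)^(m+1) * ((2:ℝ)^m * (exp 1)^m * Gm m^2)
        = 4*π*(2:ℝ)^m*(exp 1)^m * (((m:ℝ)+1)^(m+1) * Gm m^2) := by ring
      _ < 4*π*(2:ℝ)^m*(exp 1)^m * (2 * exp 1 * (m:ℝ)^m * Gm (m+1)^2) := key2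
      _ = 4*π*(m:ℝ)^m * ((2:ℝ)^(m+1) * (exp 1)^(m+1) * Gm (m+1)^2) := by ring
  exact lt_of_pow_lt_pow_left₀ 2 (lam_pos m hm).le hsq

/-- Stone's monotonicity: the entropies `λ_m` of the self-shrinking spheres (hence of
the cylinders `S^m(√m) × ℝ^{n−m}`) form a strictly decreasing sequence in `m ≥ 1`;
in particular they are all distinct. -/
theorem sphereEntropy_strictAnti :
    (∀ m : ℕ, 1 ≤ m → sphereEntropy (m + 1) < sphereEntropy m) ∧
    ∀ m₁ m₂ : ℕ, 1 ≤ m₁ → m₁ < m₂ → sphereEntropy m₂ < sphereEntropy m₁ := by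
  refine ⟨main1, ?_⟩
  intro m₁ m₂ h1 hlt
  induction m₂, hlt using Nat.le_induction with
  | base => exact main1 m₁ h1
  | succ n hn ih => exact lt_trans (main1 n (by omega)) ih
end

section
/- For a positive integer m, define λ_m = (2π)^{-m/2} · m^{m/2} · e^{-m/2} · σ_m, where σ_m = 2π^{(m+1)/2}/Γ((m+1)/2) is the m-dimensional Hausdorff measure of the unit sphere S^m ⊂ ℝ^{m+1}. Then λ_m > √2 for every m ≥ 1, and λ_m → √2 as m → ∞. -/
open Real Filter Topology

lemma key_log {t : ℝ} (h0 : 0 < t) (h1 : t < 1) :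
    (1+t)*Real.log (1+t) - (1-t)*Real.log (1-t) < 2*t := by
  set h : ℝ → ℝ := fun t => 2*t - (1+t)*Real.log (1+t) + (1-t)*Real.log (1-t) with hh
  have hmono : StrictMonoOn h (Set.Ico 0 1) := by
    apply strictMonoOn_of_deriv_pos (convex_Ico 0 1)
    · apply ContinuousOn.add
      · apply ContinuousOn.sub (continuousOn_const.mul continuousOn_id)
        apply ContinuousOn.mul (by fun_prop)
        apply ContinuousOn.log (by fun_prop)
        intro x hx; simp only [Set.mem_Ico] at hx; nlinarith [hx.1]
      · apply ContinuousOn.mul (by fun_prop)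
        apply ContinuousOn.log (by fun_prop)
        intro x hx; simp only [Set.mem_Ico] at hx; nlinarith [hx.2]
    · intro x hx
      rw [interior_Ico] at hx
      obtain ⟨hx0, hx1⟩ := hx
      have hp : (0:ℝ) < 1 + x := by linarith
      have hq : (0:ℝ) < 1 - x := by linarith
      have d1 : HasDerivAt (fun t : ℝ => 1 + t) 1 x := (hasDerivAt_id x).const_add 1
      have d2 : HasDerivAt (fun t : ℝ => 1 - t) (-1) x := by
        simpa using (hasDerivAt_id x).const_sub 1
      have dlog1 : HasDerivAt (fun t : ℝ => Real.log (1+t)) (1/(1+x)) x := by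
        simpa using d1.log hp.ne'
      have dlog2 : HasDerivAt (fun t : ℝ => Real.log (1-t)) ((-1)/(1-x)) x := by
        simpa using d2.log hq.ne'
      have dh : HasDerivAt h (2*1 - (1*Real.log (1+x) + (1+x)*(1/(1+x)))
          + ((-1)*Real.log (1-x) + (1-x)*((-1)/(1-x)))) x := by
        exact (((hasDerivAt_id x).const_mul 2).sub (d1.mul dlog1)).add (d2.mul dlog2)
      rw [dh.deriv]
      have e1 : (1+x)*(1/(1+x)) = 1 := by field_simp
      have e2 : (1-x)*((-1)/(1-x)) = -1 := by field_simp
      rw [e1, e2]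
      have hlog : Real.log (1+x) + Real.log (1-x) < 0 := by
        rw [← Real.log_mul hp.ne' hq.ne']
        apply Real.log_neg (by nlinarith) (by nlinarith)
      linarith
  have h0' : h 0 = 0 := by simp [hh]
  have := hmono (Set.mem_Ico.mpr ⟨le_refl 0, one_pos⟩) (Set.mem_Ico.mpr ⟨h0.le, h1⟩) h0
  rw [h0'] at this
  simp only [hh] at this
  linarith

lemma key_ineq {x : ℝ} (hx : 0 < x) :
    (x+1)*Real.log (x+1) < x*Real.log x + Real.log (x+1/2) + 1 := by
  set t : ℝ := 1/(2*x+1) with htdef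
  have h2x : (0:ℝ) < 2*x+1 := by linarith
  have hx2 : (0:ℝ) < x + 1/2 := by linarith
  have ht0 : 0 < t := by positivity
  have ht1 : t < 1 := by rw [htdef, div_lt_one h2x]; linarith
  have key := key_log ht0 ht1
  have e1 : 1 + t = (x+1)/(x+1/2) := by rw [htdef]; field_simp; ring
  have e2 : 1 - t = x/(x+1/2) := by rw [htdef]; field_simp; ring
  have l1 : Real.log (1+t) = Real.log (x+1) - Real.log (x+1/2) := by
    rw [e1, Real.log_div (by linarith) hx2.ne']
  have l2 : Real.log (1-t) = Real.log x - Real.log (x+1/2) := by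
    rw [e2, Real.log_div hx.ne' hx2.ne']
  have e1' : (1+t)*(x+1/2) = x+1 := by rw [e1]; field_simp
  have e2' : (1-t)*(x+1/2) = x := by rw [e2]; field_simp
  have hmul := mul_lt_mul_of_pos_right key hx2
  rw [l1, l2] at hmul
  have hr : 2*t*(x+1/2) = 1 := by rw [htdef]; field_simp
  have expand : ((1+t)*(Real.log (x+1) - Real.log (x+1/2))
      - (1-t)*(Real.log x - Real.log (x+1/2))) * (x+1/2)
      = (x+1)*Real.log (x+1) - x*Real.log x - Real.log (x+1/2) := by
    linear_combination (Real.log (x+1) - Real.log (x+1/2)) * e1'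
      - (Real.log x - Real.log (x+1/2)) * e2'
  rw [expand, hr] at hmul
  linarith

noncomputable def entF (x : ℝ) : ℝ :=
  2 * Real.sqrt π * x ^ x * Real.exp (-x) / Real.Gamma (x + 1/2)

lemma entF_succ_lt {x : ℝ} (hx : 0 < x) : entF (x+1) < entF x := by
  have hΓ : 0 < Real.Gamma (x + 1/2) := Real.Gamma_pos_of_pos (by linarith)
  have hG : Real.Gamma (x + 1 + 1/2) = (x+1/2) * Real.Gamma (x+1/2) := by
    have h : x + 1 + 1/2 = (x + 1/2) + 1 := by ring
    rw [h, Real.Gamma_add_one (by positivity)]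
  unfold entF
  rw [hG, div_lt_div_iff₀ (by positivity) (by positivity)]
  have core : (x+1)^(x+1) * Real.exp (-(x+1)) < x^x * Real.exp (-x) * (x+1/2) := by
    rw [Real.rpow_def_of_pos (by linarith : (0:ℝ) < x+1), Real.rpow_def_of_pos hx,
      ← Real.exp_log (show (0:ℝ) < x+1/2 by linarith), ← Real.exp_add, ← Real.exp_add,
      ← Real.exp_add]
    exact Real.exp_lt_exp.mpr (by linarith [key_ineq hx])
  have h2 : (0:ℝ) < 2*Real.sqrt π * Real.Gamma (x+1/2) := by positivity
  nlinarith [mul_lt_mul_of_pos_right core h2]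

lemma sphereEntropy_eq (m : ℕ) : sphereEntropy m = entF ((m : ℝ) / 2) := by
  have hm : (0:ℝ) ≤ m := Nat.cast_nonneg m
  have hπ := Real.pi_pos
  unfold sphereEntropy entF
  have h1 : ((m:ℝ) + 1)/2 = (m:ℝ)/2 + 1/2 := by ring
  rw [h1]
  have h2 : (2 * π) ^ (-(m:ℝ)/2) = (2:ℝ) ^ (-(m:ℝ)/2) * π ^ (-(m:ℝ)/2) :=
    Real.mul_rpow (by norm_num) hπ.le
  have h3 : π ^ ((m:ℝ)/2 + 1/2) = π ^ ((m:ℝ)/2) * Real.sqrt π := by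
    rw [Real.rpow_add hπ, ← Real.sqrt_eq_rpow]
  have h4 : ((m:ℝ)/2) ^ ((m:ℝ)/2) = (m:ℝ)^((m:ℝ)/2) * ((2:ℝ)^((m:ℝ)/2))⁻¹ := by
    rw [Real.div_rpow hm (by norm_num), div_eq_mul_inv]
  have h5 : π ^ (-((m:ℝ)/2)) * π ^ ((m:ℝ)/2) = 1 := by
    rw [← Real.rpow_add hπ]; simp
  have h6 : (2:ℝ) ^ (-((m:ℝ)/2)) = ((2:ℝ)^((m:ℝ)/2))⁻¹ := Real.rpow_neg (by norm_num) _
  have h7 : -(m:ℝ)/2 = -((m:ℝ)/2) := by ring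
  rw [h2, h3, h4, h7, h6]
  have h8 : π ^ ((m:ℝ)/2) ≠ 0 := (Real.rpow_pos_of_pos hπ _).ne'
  field_simp
  have h5' : π ^ (-(m:ℝ)/2) * π ^ ((m:ℝ)/2) = 1 := by
    have hz : -(m:ℝ)/2 + (m:ℝ)/2 = 0 := by ring
    rw [← Real.rpow_add hπ, hz, Real.rpow_zero]
  linear_combination (m:ℝ)^((m:ℝ)/2) * h5

lemma myGamma_nat_add_half (k : ℕ) :
    Real.Gamma ((k:ℝ) + 1/2)
      = ((2*k).factorial : ℝ) * Real.sqrt π / (4^k * (k.factorial : ℝ)) := by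
  induction k with
  | zero =>
    simp only [Nat.cast_zero, zero_add, mul_zero, Nat.factorial_zero, Nat.cast_one, pow_zero]
    rw [Real.Gamma_one_half_eq]; norm_num
  | succ n ih =>
    have h : ((n+1:ℕ):ℝ) + 1/2 = ((n:ℝ) + 1/2) + 1 := by push_cast; ring
    rw [h, Real.Gamma_add_one (by positivity), ih]
    have hfac : (2*(n+1)).factorial = (2*n+2) * ((2*n+1) * (2*n).factorial) := by
      have : 2*(n+1) = (2*n+1) + 1 := by ring
      rw [this, Nat.factorial_succ, Nat.factorial_succ]
    rw [hfac, Nat.factorial_succ]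
    have h1 : ((2*n).factorial : ℝ) ≠ 0 := by positivity
    have h2 : ((n).factorial : ℝ) ≠ 0 := by positivity
    push_cast
    field_simp
    ring

lemma entF_even (k : ℕ) (hk : 1 ≤ k) :
    entF (k:ℝ) = 2 / Real.sqrt 2 *
      (Stirling.stirlingSeq k / Stirling.stirlingSeq (2*k)) := by
  have hk0 : (0:ℝ) < k := by exact_mod_cast hk
  have hE : (0:ℝ) < Real.exp 1 := Real.exp_pos 1
  have hexp : Real.exp (-(k:ℝ)) = (Real.exp 1 ^ k)⁻¹ := by
    rw [← Real.exp_nat_mul, ← Real.exp_neg]; norm_num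
  have hsqrt2 : Real.sqrt (2*((2:ℝ)*k)) = Real.sqrt 2 * Real.sqrt (2*k) :=
    Real.sqrt_mul (by norm_num) _
  have hs2k : (0:ℝ) < Real.sqrt (2*(k:ℝ)) := Real.sqrt_pos.mpr (by positivity)
  have hsπ : (0:ℝ) < Real.sqrt π := Real.sqrt_pos.mpr Real.pi_pos
  have hs2 : (0:ℝ) < Real.sqrt 2 := by positivity
  have hf1 : (0:ℝ) < (k.factorial : ℝ) := by positivity
  have hf2 : (0:ℝ) < ((2*k).factorial : ℝ) := by positivity
  unfold entF Stirling.stirlingSeq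
  rw [myGamma_nat_add_half k, Real.rpow_natCast, hexp]
  push_cast
  rw [hsqrt2]
  have n1 : ((2*k).factorial:ℝ) ≠ 0 := hf2.ne'
  have n2 : (k.factorial:ℝ) ≠ 0 := hf1.ne'
  have n3 : Real.sqrt (2*(k:ℝ)) ≠ 0 := hs2k.ne'
  have n4 : Real.sqrt 2 ≠ 0 := hs2.ne'
  have n5 : Real.sqrt π ≠ 0 := hsπ.ne'
  have n6 : Real.exp 1 ≠ 0 := hE.ne'
  have n7 : (k:ℝ) ≠ 0 := hk0.ne'
  field_simp
  rw [div_pow, div_pow, pow_mul, pow_mul]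
  field_simp
  ring

lemma entF_odd (k : ℕ) (hk : 1 ≤ k) :
    entF ((k:ℝ) + 1/2) = 2 * Real.sqrt π / Stirling.stirlingSeq k *
      ((1 + (1/2)/(k:ℝ))^k * Real.exp (-(1/2)) *
        Real.sqrt (((k:ℝ)+1/2)/(2*(k:ℝ)))) := by
  have hk0 : (0:ℝ) < k := by exact_mod_cast hk
  have hb : (0:ℝ) < (k:ℝ) + 1/2 := by linarith
  have hE : (0:ℝ) < Real.exp 1 := Real.exp_pos 1
  unfold entF Stirling.stirlingSeq
  have hΓ : Real.Gamma ((k:ℝ) + 1/2 + 1/2) = (k.factorial : ℝ) := by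
    rw [show (k:ℝ) + 1/2 + 1/2 = (k:ℝ) + 1 by ring, Real.Gamma_nat_eq_factorial]
  have hpow : ((k:ℝ) + 1/2) ^ ((k:ℝ) + 1/2)
      = ((k:ℝ) + 1/2)^k * Real.sqrt ((k:ℝ) + 1/2) := by
    rw [Real.rpow_add hb, Real.rpow_natCast, ← Real.sqrt_eq_rpow]
  have hexp : Real.exp (-((k:ℝ) + 1/2)) = (Real.exp 1 ^ k)⁻¹ * Real.exp (-(1/2)) := by
    rw [show -((k:ℝ) + 1/2) = -(k:ℝ) + -(1/2) by ring, Real.exp_add, ← Real.exp_nat_mul,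
      ← Real.exp_neg]
    norm_num
  have hone : 1 + (1/2)/(k:ℝ) = ((k:ℝ)+1/2)/(k:ℝ) := by field_simp
  have hsq : Real.sqrt (((k:ℝ)+1/2)/(2*(k:ℝ)))
      = Real.sqrt ((k:ℝ)+1/2) / Real.sqrt (2*(k:ℝ)) := Real.sqrt_div hb.le _
  rw [hΓ, hpow, hexp, hone, hsq, div_pow]
  have n1 : (k.factorial:ℝ) ≠ 0 := by positivity
  have n2 : Real.sqrt (2*(k:ℝ)) ≠ 0 := (Real.sqrt_pos.mpr (by positivity)).ne'
  have n3 : Real.exp 1 ≠ 0 := hE.ne'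
  have n4 : (k:ℝ) ≠ 0 := hk0.ne'
  have n5 : ((k:ℝ)+1/2) ≠ 0 := hb.ne'
  field_simp
  ring_nf
  rw [mul_inv_cancel₀ n4, ← mul_pow]
  congr 1
  field_simp
  ring

lemma hsπ : (0:ℝ) < Real.sqrt π := Real.sqrt_pos.mpr Real.pi_pos

lemma tendsto_even : Tendsto (fun k : ℕ => entF (k:ℝ)) atTop (𝓝 (Real.sqrt 2)) := by
  have h1 : Tendsto (fun k : ℕ => Stirling.stirlingSeq k) atTop (𝓝 (Real.sqrt π)) :=
    Stirling.tendsto_stirlingSeq_sqrt_pi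
  have h2 : Tendsto (fun k : ℕ => Stirling.stirlingSeq (2*k)) atTop (𝓝 (Real.sqrt π)) := by
    apply h1.comp
    apply tendsto_atTop_atTop.mpr
    exact fun b => ⟨b, fun a ha => by omega⟩
  have h3 : Tendsto (fun k : ℕ => 2 / Real.sqrt 2 *
      (Stirling.stirlingSeq k / Stirling.stirlingSeq (2*k))) atTop
      (𝓝 (2 / Real.sqrt 2 * (Real.sqrt π / Real.sqrt π))) :=
    tendsto_const_nhds.mul (h1.div h2 hsπ.ne')
  have hval : 2 / Real.sqrt 2 * (Real.sqrt π / Real.sqrt π) = Real.sqrt 2 := by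
    rw [div_self hsπ.ne', mul_one, Real.div_sqrt]
  rw [hval] at h3
  apply h3.congr'
  filter_upwards [eventually_ge_atTop 1] with k hk
  exact (entF_even k hk).symm

lemma tendsto_odd : Tendsto (fun k : ℕ => entF ((k:ℝ) + 1/2)) atTop (𝓝 (Real.sqrt 2)) := by
  have h1 : Tendsto (fun k : ℕ => 2 * Real.sqrt π / Stirling.stirlingSeq k) atTop
      (𝓝 (2 * Real.sqrt π / Real.sqrt π)) :=
    tendsto_const_nhds.div Stirling.tendsto_stirlingSeq_sqrt_pi hsπ.ne'
  have h2 : Tendsto (fun k : ℕ => (1 + (1/2)/(k:ℝ))^k) atTop (𝓝 (Real.exp (1/2))) :=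
    Real.tendsto_one_add_div_pow_exp (1/2)
  have h3 : Tendsto (fun k : ℕ => Real.sqrt (((k:ℝ)+1/2)/(2*(k:ℝ)))) atTop
      (𝓝 (Real.sqrt (1/2))) := by
    apply (Real.continuous_sqrt.tendsto _).comp
    have hi : Tendsto (fun k : ℕ => 1/2 + (1/4)*(1/(k:ℝ))) atTop (𝓝 (1/2)) := by
      have := tendsto_one_div_atTop_nhds_zero_nat (𝕜 := ℝ)
      simpa using tendsto_const_nhds.add (tendsto_const_nhds.mul this)
    apply hi.congr'
    filter_upwards [eventually_ge_atTop 1] with k hk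
    have hk0 : (0:ℝ) < k := by exact_mod_cast hk
    field_simp
    ring
  have T : Tendsto (fun k : ℕ => 2 * Real.sqrt π / Stirling.stirlingSeq k *
      ((1 + (1/2)/(k:ℝ))^k * Real.exp (-(1/2)) *
        Real.sqrt (((k:ℝ)+1/2)/(2*(k:ℝ))))) atTop
      (𝓝 (2 * Real.sqrt π / Real.sqrt π *
        (Real.exp (1/2) * Real.exp (-(1/2)) * Real.sqrt (1/2)))) :=
    h1.mul ((h2.mul tendsto_const_nhds).mul h3)
  have hval : 2 * Real.sqrt π / Real.sqrt π *
      (Real.exp (1/2) * Real.exp (-(1/2)) * Real.sqrt (1/2)) = Real.sqrt 2 := by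
    have e0 : Real.exp (1/2) * Real.exp (-(1/2)) = 1 := by rw [← Real.exp_add]; norm_num
    have e1 : 2 * Real.sqrt π / Real.sqrt π = 2 := by
      rw [mul_div_assoc, div_self hsπ.ne', mul_one]
    rw [e0, one_mul, e1, show (1:ℝ)/2 = (2:ℝ)⁻¹ by norm_num, Real.sqrt_inv,
      ← div_eq_mul_inv, Real.div_sqrt]
  rw [hval] at T
  apply T.congr'
  filter_upwards [eventually_ge_atTop 1] with k hk
  exact (entF_odd k hk).symm

/-- Stone's limit result: the sphere entropies satisfy `λ_m > √2` for all `m ≥ 1`,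
and `λ_m → √2` as `m → ∞`. -/
theorem sphereEntropy_gt_sqrt_two_and_tendsto_sqrt_two :
    (∀ m : ℕ, 1 ≤ m → Real.sqrt 2 < sphereEntropy m) ∧
    Tendsto (fun m : ℕ => sphereEntropy m) atTop (nhds (Real.sqrt 2)) := by
  have heven : Tendsto (fun k : ℕ => sphereEntropy (2*k)) atTop (𝓝 (Real.sqrt 2)) := by
    apply tendsto_even.congr
    intro k
    rw [sphereEntropy_eq, show ((2*k:ℕ):ℝ)/2 = (k:ℝ) by push_cast; ring]
  have hodd : Tendsto (fun k : ℕ => sphereEntropy (2*k+1)) atTop (𝓝 (Real.sqrt 2)) := by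
    apply tendsto_odd.congr
    intro k
    rw [sphereEntropy_eq, show ((2*k+1:ℕ):ℝ)/2 = (k:ℝ) + 1/2 by push_cast; ring]
  have hfull : Tendsto (fun m : ℕ => sphereEntropy m) atTop (𝓝 (Real.sqrt 2)) := by
    rw [Metric.tendsto_atTop] at heven hodd ⊢
    intro ε hε
    obtain ⟨N₁, h₁⟩ := heven ε hε
    obtain ⟨N₂, h₂⟩ := hodd ε hε
    refine ⟨2*(max N₁ N₂) + 1, fun n hn => ?_⟩
    rcases Nat.even_or_odd n with ⟨k, hk⟩ | ⟨k, hk⟩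
    · have hn2 : n = 2*k := by omega
      rw [hn2]; exact h₁ k (by omega)
    · have hn2 : n = 2*k+1 := by omega
      rw [hn2]; exact h₂ k (by omega)
  have step : ∀ m : ℕ, 1 ≤ m → sphereEntropy (m+2) < sphereEntropy m := by
    intro m hm
    have hm0 : (0:ℝ) < (m:ℝ)/2 := by
      have : (1:ℝ) ≤ m := by exact_mod_cast hm
      linarith
    rw [sphereEntropy_eq m, sphereEntropy_eq (m+2),
      show ((m+2:ℕ):ℝ)/2 = (m:ℝ)/2 + 1 by push_cast; ring]
    exact entF_succ_lt hm0
  have bound : ∀ m : ℕ, 1 ≤ m → ∀ k : ℕ, sphereEntropy (m + 2*k) ≤ sphereEntropy m := by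
    intro m hm k
    induction k with
    | zero => simp
    | succ n ih =>
      have h1 : sphereEntropy (m + 2*(n+1)) < sphereEntropy (m + 2*n) := by
        have he : m + 2*(n+1) = (m+2*n)+2 := by omega
        rw [he]
        exact step (m + 2*n) (by omega)
      linarith
  have lower : ∀ m : ℕ, 1 ≤ m → Real.sqrt 2 ≤ sphereEntropy m := by
    intro m hm
    have hsub : Tendsto (fun k : ℕ => sphereEntropy (m + 2*k)) atTop (𝓝 (Real.sqrt 2)) := by
      apply hfull.comp
      apply tendsto_atTop_atTop.mpr
      exact fun b => ⟨b, fun a ha => by omega⟩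
    exact le_of_tendsto' hsub (bound m hm)
  constructor
  · intro m hm
    calc Real.sqrt 2 ≤ sphereEntropy (m+2) := lower (m+2) (by omega)
    _ < sphereEntropy m := step m hm
  · exact hfull
end
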